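/- Let A be a p×p real matrix and Φ a symmetric positive semi-definite p×p matrix with λ_max(Φ) ≤ C. Then for every even positive integer q, tr((Φ^{1/2} A Φ Aᵀ Φ^{1/2})^{q/2}) ≤ C^q · tr((A Aᵀ)^{q/2}). -/

import Mathlib

open Matrix Finset

open scoped ComplexOrder in
/-- The positive semidefinite square root of a positive semidefinite matrix
(as defined in Mathlib of December 2024, since removed). -/
noncomputable def Matrix.PosSemidef.sqrt {n 𝕜 : Type*} [Fintype n] [RCLike 𝕜] [DecidableEq n]
    {A : Matrix n n 𝕜} (hA : A.PosSemidef) : Matrix n n 𝕜 :=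
  hA.1.eigenvectorUnitary.1 * diagonal ((↑) ∘ Real.sqrt ∘ hA.1.eigenvalues) *
    (star hA.1.eigenvectorUnitary : Matrix n n 𝕜)

lemma Matrix.PosSemidef.posSemidef_sqrt {p : ℕ} {A : Matrix (Fin p) (Fin p) ℝ}
    (hA : A.PosSemidef) : hA.sqrt.PosSemidef := by
  unfold Matrix.PosSemidef.sqrt
  have hd : (diagonal (Real.sqrt ∘ hA.1.eigenvalues)).PosSemidef :=
    posSemidef_diagonal_iff.mpr fun i => by simp [Real.sqrt_nonneg]
  simpa [Matrix.star_eq_conjTranspose] using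
    hd.mul_mul_conjTranspose_same (hA.1.eigenvectorUnitary : Matrix (Fin p) (Fin p) ℝ)

lemma Matrix.PosSemidef.sqrt_mul_self {p : ℕ} {A : Matrix (Fin p) (Fin p) ℝ}
    (hA : A.PosSemidef) : hA.sqrt * hA.sqrt = A := by
  unfold Matrix.PosSemidef.sqrt
  have hU : star (hA.1.eigenvectorUnitary : Matrix (Fin p) (Fin p) ℝ)
      * (hA.1.eigenvectorUnitary : Matrix (Fin p) (Fin p) ℝ) = 1 :=
    (Matrix.mem_unitaryGroup_iff').mp hA.1.eigenvectorUnitary.2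
  have hspec := hA.1.spectral_theorem
  rw [Unitary.conjStarAlgAut_apply] at hspec
  have hdd : diagonal ((↑) ∘ Real.sqrt ∘ hA.1.eigenvalues : Fin p → ℝ)
      * diagonal ((↑) ∘ Real.sqrt ∘ hA.1.eigenvalues : Fin p → ℝ)
      = diagonal (RCLike.ofReal ∘ hA.1.eigenvalues) := by
    rw [diagonal_mul_diagonal]; congr 1; ext i
    simp [Real.mul_self_sqrt (hA.eigenvalues_nonneg i)]
  conv_rhs => rw [hspec]
  calc _ = (hA.1.eigenvectorUnitary : Matrix (Fin p) (Fin p) ℝ)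
        * (diagonal ((↑) ∘ Real.sqrt ∘ hA.1.eigenvalues : Fin p → ℝ)
        * (star (hA.1.eigenvectorUnitary : Matrix (Fin p) (Fin p) ℝ)
            * (hA.1.eigenvectorUnitary : Matrix (Fin p) (Fin p) ℝ))
        * diagonal ((↑) ∘ Real.sqrt ∘ hA.1.eigenvalues : Fin p → ℝ))
        * star (hA.1.eigenvectorUnitary : Matrix (Fin p) (Fin p) ℝ) := by
          simp only [Matrix.mul_assoc]; rfl
    _ = _ := by rw [hU, Matrix.mul_one, hdd]

namespace Stmt2Aux

variable {p : ℕ}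

private lemma ctr (A : Matrix (Fin p) (Fin p) ℝ) : Aᴴ = Aᵀ := by
  ext i j; simp [conjTranspose_apply]

private lemma psd_add {A B : Matrix (Fin p) (Fin p) ℝ} (hA : A.PosSemidef)
    (hB : B.PosSemidef) : (A + B).PosSemidef :=
  hA.add hB

private lemma psd_smul {A : Matrix (Fin p) (Fin p) ℝ} (hA : A.PosSemidef)
    {c : ℝ} (hc : 0 ≤ c) : (c • A).PosSemidef := by
  refine ⟨?_, fun x => ?_⟩
  · unfold Matrix.IsHermitian
    rw [conjTranspose_smul, hA.1]
    simp
  · exact (hA.smul hc).2 x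

private lemma trace_psd_nonneg {A : Matrix (Fin p) (Fin p) ℝ} (hA : A.PosSemidef) :
    0 ≤ A.trace := by
  obtain ⟨B, rfl⟩ : ∃ B : Matrix (Fin p) (Fin p) ℝ, A = Bᴴ * B :=
    ⟨hA.sqrt, by rw [hA.posSemidef_sqrt.1.eq, hA.sqrt_mul_self]⟩
  rw [Matrix.trace_mul_comm, Matrix.trace]
  refine Finset.sum_nonneg fun i _ => ?_
  simp only [diag_apply, mul_apply, conjTranspose_apply, star_trivial]
  exact Finset.sum_nonneg fun j _ => mul_self_nonneg _

private lemma trace_mul_psd_nonneg {A B : Matrix (Fin p) (Fin p) ℝ}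
    (hA : A.PosSemidef) (hB : B.PosSemidef) : 0 ≤ (A * B).trace := by
  obtain ⟨R, rfl⟩ : ∃ R : Matrix (Fin p) (Fin p) ℝ, B = Rᴴ * R :=
    ⟨hB.sqrt, by rw [hB.posSemidef_sqrt.1.eq, hB.sqrt_mul_self]⟩
  rw [show A * (Rᴴ * R) = (A * Rᴴ) * R by rw [mul_assoc], Matrix.trace_mul_comm,
    ← mul_assoc]
  exact trace_psd_nonneg (hA.mul_mul_conjTranspose_same R)

section Calculus

attribute [local instance] Matrix.frobeniusNormedAddCommGroup Matrix.frobeniusNormedSpace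
  Matrix.frobeniusNormedRing Matrix.frobeniusNormedAlgebra

private lemma hasDerivAt_matpow (M D : Matrix (Fin p) (Fin p) ℝ) (n : ℕ) (t : ℝ) :
    HasDerivAt (fun s : ℝ => (M + s • D) ^ n)
      (∑ i ∈ Finset.range n,
        (M + t • D) ^ i * D * (M + t • D) ^ (n - 1 - i)) t := by
  induction n with
  | zero =>
    simp only [pow_zero, Finset.sum_range_zero]
    exact hasDerivAt_const t (1 : Matrix (Fin p) (Fin p) ℝ)
  | succ n ih =>
    have hF : HasDerivAt (fun s : ℝ => M + s • D) D t := by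
      have h := ((hasDerivAt_id t).smul_const D).const_add M
      rw [one_smul] at h
      exact h
    have h2 := ih.mul hF
    set F := M + t • D with hFdef
    have key : (∑ i ∈ Finset.range n, F ^ i * D * F ^ (n - 1 - i)) * F + F ^ n * D
        = ∑ i ∈ Finset.range (n + 1), F ^ i * D * F ^ (n + 1 - 1 - i) := by
      rw [Finset.sum_range_succ, Finset.sum_mul]
      congr 1
      · refine Finset.sum_congr rfl fun i hi => ?_
        rw [mul_assoc, ← pow_succ]
        congr 2
        have := Finset.mem_range.mp hi
        omega
      · simp
    rw [← key] at *
    exact h2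

private lemma hasDerivAt_trace_matpow (M D : Matrix (Fin p) (Fin p) ℝ) (n : ℕ) (t : ℝ) :
    HasDerivAt (fun s : ℝ => ((M + s • D) ^ n).trace)
      (∑ i ∈ Finset.range n,
        ((M + t • D) ^ i * D * (M + t • D) ^ (n - 1 - i)).trace) t := by
  have h := hasDerivAt_matpow M D n t
  have h2 := ((LinearMap.toContinuousLinearMap
      (Matrix.traceLinearMap (Fin p) ℝ ℝ)).hasFDerivAt
      (x := (M + t • D) ^ n)).comp_hasDerivAt t h
  refine h2.congr_deriv ?_
  exact map_sum (Matrix.traceLinearMap (Fin p) ℝ ℝ) _ _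

/-- Monotonicity of `tr (X ^ n)` in the Loewner order, proved by differentiating
along the segment from `A` to `B`. -/
private lemma trace_pow_le_of_psd_le {A B : Matrix (Fin p) (Fin p) ℝ}
    (hA : A.PosSemidef) (hAB : (B - A).PosSemidef) (n : ℕ) :
    (A ^ n).trace ≤ (B ^ n).trace := by
  set D := B - A with hD
  have key : MonotoneOn (fun s : ℝ => ((A + s • D) ^ n).trace) (Set.Icc 0 1) := by
    apply monotoneOn_of_deriv_nonneg (convex_Icc 0 1)
    · exact fun t _ =>
        ((hasDerivAt_trace_matpow A D n t).continuousAt).continuousWithinAt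
    · intro t _
      exact (hasDerivAt_trace_matpow A D n t).differentiableAt.differentiableWithinAt
    · intro t ht
      rw [interior_Icc] at ht
      rw [(hasDerivAt_trace_matpow A D n t).deriv]
      refine Finset.sum_nonneg fun i _ => ?_
      have hF : (A + t • D).PosSemidef := psd_add hA (psd_smul hAB ht.1.le)
      rw [mul_assoc, Matrix.trace_mul_comm, mul_assoc, ← pow_add, Matrix.trace_mul_comm]
      exact trace_mul_psd_nonneg (hF.pow _) hAB
  have h01 := key (Set.left_mem_Icc.mpr zero_le_one) (Set.right_mem_Icc.mpr zero_le_one)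
    zero_le_one
  simpa [hD] using h01

end Calculus

private lemma pow_mul_comm_aux (P Q : Matrix (Fin p) (Fin p) ℝ) (n : ℕ) :
    (Q * P) ^ (n + 1) = Q * ((P * Q) ^ n * P) := by
  induction n with
  | zero => simp
  | succ n ih =>
    rw [pow_succ, ih, pow_succ]
    noncomm_ring

private lemma trace_pow_mul_comm (P Q : Matrix (Fin p) (Fin p) ℝ) (n : ℕ) :
    ((P * Q) ^ n).trace = ((Q * P) ^ n).trace := by
  cases n with
  | zero => simp
  | succ n =>
    conv_rhs => rw [pow_mul_comm_aux, Matrix.trace_mul_comm, mul_assoc, ← pow_succ]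

/-- `C • 1 - Φ` is PSD when all eigenvalues of `Φ` are at most `C`. -/
private lemma shift_psd {Φ : Matrix (Fin p) (Fin p) ℝ} (hΦ : Φ.PosSemidef) {C : ℝ}
    (hmax : ∀ i, hΦ.1.eigenvalues i ≤ C) :
    (C • (1 : Matrix (Fin p) (Fin p) ℝ) - Φ).PosSemidef := by
  set U : Matrix (Fin p) (Fin p) ℝ := (hΦ.1.eigenvectorUnitary : Matrix (Fin p) (Fin p) ℝ) with hUdef
  have hU : U * star U = 1 := (Matrix.mem_unitaryGroup_iff).mp hΦ.1.eigenvectorUnitary.2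
  have hspec := hΦ.1.spectral_theorem
  rw [Unitary.conjStarAlgAut_apply] at hspec
  have hEq : C • (1 : Matrix (Fin p) (Fin p) ℝ) - Φ
      = U * (diagonal fun i => C - hΦ.1.eigenvalues i) * star U := by
    have hdiag : (diagonal fun i => C - hΦ.1.eigenvalues i)
        = C • (1 : Matrix (Fin p) (Fin p) ℝ)
          - diagonal (RCLike.ofReal ∘ hΦ.1.eigenvalues) := by
      ext i j
      rcases eq_or_ne i j with rfl | h
      · simp
      · simp [Matrix.diagonal_apply_ne _ h, Matrix.one_apply_ne h]
    rw [hdiag, Matrix.mul_sub, Matrix.sub_mul, ← hspec]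
    congr 1
    rw [mul_smul_comm, mul_one, smul_mul_assoc, hU]
  rw [hEq]
  have hd : (diagonal fun i => C - hΦ.1.eigenvalues i).PosSemidef :=
    posSemidef_diagonal_iff.mpr fun i => sub_nonneg.2 (hmax i)
  simpa [Matrix.star_eq_conjTranspose, Matrix.mul_assoc] using hd.mul_mul_conjTranspose_same U


/-- Core inequality with abstract square roots `S` of `Φ` and `R` of `X = A Aᵀ`. -/
private lemma main_aux {S Φ X R : Matrix (Fin p) (Fin p) ℝ} (A : Matrix (Fin p) (Fin p) ℝ)
    {C : ℝ} (hC : 0 ≤ C) (hΦ : Φ.PosSemidef) (hS : S.PosSemidef) (hSS : S * S = Φ)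
    (hshift : ((C • (1 : Matrix (Fin p) (Fin p) ℝ)) - Φ).PosSemidef)
    (hXdef : X = A * Aᵀ) (hR : R.PosSemidef) (hRR : R * R = X) (m : ℕ) :
    ((S * A * Φ * Aᵀ * S) ^ m).trace ≤ C ^ (2 * m) * (X ^ m).trace := by
  have hShe : Sᴴ = S := hS.1
  have hRhe : Rᴴ = R := hR.1
  have hct : (S * A)ᴴ = Aᵀ * S := by rw [conjTranspose_mul, hShe, ctr]
  have hT : (S * A * Φ * Aᵀ * S).PosSemidef := by
    have h := hΦ.mul_mul_conjTranspose_same (S * A)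
    rw [hct] at h
    have e : S * A * Φ * (Aᵀ * S) = S * A * Φ * Aᵀ * S := by
      rw [← mul_assoc]
    rwa [e] at h
  have hstepA : ((C • (S * X * S)) - S * A * Φ * Aᵀ * S).PosSemidef := by
    have h := hshift.mul_mul_conjTranspose_same (S * A)
    have heq : (S * A) * (C • (1 : Matrix (Fin p) (Fin p) ℝ) - Φ) * (S * A)ᴴ
        = C • (S * X * S) - S * A * Φ * Aᵀ * S := by
      rw [hct, Matrix.mul_sub, Matrix.sub_mul]
      congr 1
      · rw [mul_smul_comm, mul_one, smul_mul_assoc, hXdef]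
        congr 1
        simp only [mul_assoc]
      · simp only [mul_assoc]
    rwa [heq] at h
  have h1 : ((S * A * Φ * Aᵀ * S) ^ m).trace ≤ ((C • (S * X * S)) ^ m).trace :=
    trace_pow_le_of_psd_le hT hstepA m
  have h2 : ((C • (S * X * S)) ^ m).trace = C ^ m * ((S * X * S) ^ m).trace := by
    rw [smul_pow, Matrix.trace_smul, smul_eq_mul]
  have h3 : ((S * X * S) ^ m).trace = ((R * Φ * R) ^ m).trace := by
    calc ((S * X * S) ^ m).trace = ((S * (X * S)) ^ m).trace := by rw [mul_assoc]
      _ = (((X * S) * S) ^ m).trace := trace_pow_mul_comm S (X * S) m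
      _ = ((R * (R * Φ)) ^ m).trace := by rw [mul_assoc, hSS, ← hRR, mul_assoc]
      _ = (((R * Φ) * R) ^ m).trace := trace_pow_mul_comm R (R * Φ) m
  have hRΦR : (R * Φ * R).PosSemidef := by
    have h := hΦ.mul_mul_conjTranspose_same R
    rwa [hRhe] at h
  have hstepD : ((C • X) - R * Φ * R).PosSemidef := by
    have h := hshift.mul_mul_conjTranspose_same R
    have heq : R * (C • (1 : Matrix (Fin p) (Fin p) ℝ) - Φ) * Rᴴ
        = C • X - R * Φ * R := by
      rw [hRhe, Matrix.mul_sub, Matrix.sub_mul]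
      congr 1
      rw [mul_smul_comm, mul_one, smul_mul_assoc, hRR]
    rwa [heq] at h
  have h4 : ((R * Φ * R) ^ m).trace ≤ ((C • X) ^ m).trace :=
    trace_pow_le_of_psd_le hRΦR hstepD m
  have h5 : ((C • X) ^ m).trace = C ^ m * (X ^ m).trace := by
    rw [smul_pow, Matrix.trace_smul, smul_eq_mul]
  have hCm : (0 : ℝ) ≤ C ^ m := pow_nonneg hC m
  calc ((S * A * Φ * Aᵀ * S) ^ m).trace
      ≤ C ^ m * ((S * X * S) ^ m).trace := h1.trans_eq h2
    _ = C ^ m * ((R * Φ * R) ^ m).trace := by rw [h3]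
    _ ≤ C ^ m * (C ^ m * (X ^ m).trace) :=
        mul_le_mul_of_nonneg_left (h4.trans_eq h5) hCm
    _ = C ^ (2 * m) * (X ^ m).trace := by rw [← mul_assoc, ← pow_add, two_mul]

end Stmt2Aux

open Stmt2Aux in
/-- For A a p×p real matrix and Φ symmetric PSD with
λ_max(Φ) ≤ C, for every even positive integer q = 2m,
tr((Φ^{1/2} A Φ Aᵀ Φ^{1/2})^{q/2}) ≤ C^q · tr((A Aᵀ)^{q/2}). -/
theorem stmt_2 {p : ℕ} (A Φ : Matrix (Fin p) (Fin p) ℝ)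
    (hΦ : Φ.PosSemidef) (C : ℝ) (hC : 0 < C)
    (hmax : ∀ i, hΦ.1.eigenvalues i ≤ C) :
    ∀ m : ℕ, 0 < m →
      ((hΦ.sqrt * A * Φ * Aᵀ * hΦ.sqrt) ^ m).trace
        ≤ C ^ (2 * m) * ((A * Aᵀ) ^ m).trace := by
  intro m _
  have hX : (A * Aᵀ).PosSemidef := by
    have := posSemidef_self_mul_conjTranspose A
    rwa [ctr] at this
  exact main_aux A hC.le hΦ hΦ.posSemidef_sqrt hΦ.sqrt_mul_self (shift_psd hΦ hmax)
    rfl hX.posSemidef_sqrt hX.sqrt_mul_self m
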